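/- Let n ≥ 2 and let G(n) be the group presented by generators x_1,…,x_{3n} and relations R_orig(n). Then in G(n) the cyclic relation [x_1, x_{2n+1}, …, x_{3n}] holds, i.e. x_{3n} ⋯ x_{2n+1} x_1 = x_{3n-1} ⋯ x_{2n+1} x_1 x_{3n} = ⋯ = x_1 x_{3n} ⋯ x_{2n+1}. -/

import Mathlib

/-- The descending product `X b * X (b-1) * ⋯ * X a` (equal to `1` when `b < a`). -/
def dprod {G : Type*} [Monoid G] (X : ℕ → G) (a b : ℕ) : G :=
  (((List.range' a (b + 1 - a)).reverse).map X).prod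

/-- The set of relators expressing the cyclic system of relations
`[a₁, …, a_k]`, i.e. that all cyclic rotations of the product `a_k ⋯ a₁` are equal. -/
def cycRels {G : Type*} [Group G] (l : List G) : Set G :=
  { r | ∃ k : ℕ, r = (l.rotate k).reverse.prod * (l.reverse.prod)⁻¹ }

/-- The cyclic system of relations `[a₁, …, a_k]` holds in a group:
all cyclic rotations of the product `a_k ⋯ a₁` are equal. -/
def cycHolds {G : Type*} [Group G] (l : List G) : Prop :=
  ∀ k : ℕ, (l.rotate k).reverse.prod = l.reverse.prod

/-- The `i`-th (1-based) generator of the free group on `Fin N`. -/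
def gen (N : ℕ) (i : ℕ) : FreeGroup (Fin N) :=
  if h : 0 < N then FreeGroup.of ⟨(i - 1) % N, Nat.mod_lt _ h⟩ else 1

/-- The relation set `R_orig(n)` on the generators `x₁, …, x₃ₙ`. -/
def Rorig (n : ℕ) : Set (FreeGroup (Fin (3 * n))) :=
  let X : ℕ → FreeGroup (Fin (3 * n)) := gen (3 * n)
  (⋃ i ∈ Set.Icc 1 n, ⋃ j ∈ Set.Icc (n + 1) (2 * n - 1),
      cycRels [X i, (dprod X (n + 1) (j - 1))⁻¹ * X j * dprod X (n + 1) (j - 1)]) ∪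
  cycRels ((List.range' 1 n).map X ++
      [(dprod X (n + 1) (2 * n - 1))⁻¹ * X (2 * n) * dprod X (n + 1) (2 * n - 1)]) ∪
  cycRels ((dprod X 2 (2 * n) * X 1 * (dprod X 2 (2 * n))⁻¹) ::
      (List.range' (2 * n + 1) n).map X) ∪
  (⋃ i ∈ Set.Icc 2 n, ⋃ j ∈ Set.Icc (2 * n + 1) (3 * n),
      cycRels [dprod X (i + 1) (2 * n) * X i * (dprod X (i + 1) (2 * n))⁻¹, X j]) ∪
  (⋃ i ∈ Set.Icc (n + 1) (2 * n), ⋃ j ∈ Set.Icc (2 * n + 2) (3 * n), cycRels [X i, X j]) ∪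
  cycRels ((List.range' (n + 1) n).map X ++ [X (2 * n + 1)])

/-- The image of the `i`-th (1-based) generator `xᵢ` in the presented group
`G(n) = ⟨x₁,…,x₃ₙ ∣ R_orig(n)⟩`. -/
def genG (n : ℕ) (i : ℕ) : PresentedGroup (Rorig n) :=
  PresentedGroup.mk (Rorig n) (gen (3 * n) i)

section CycAux
variable {G : Type*} [Group G]

lemma rev_prod_rotate (l : List G) {k : ℕ} (hk : k ≤ l.length) :
    (l.rotate k).reverse.prod = (l.take k).reverse.prod * (l.drop k).reverse.prod := by
  rw [List.rotate_eq_drop_append_take hk, List.reverse_append, List.prod_append]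

lemma rev_prod_split (l : List G) (k : ℕ) :
    l.reverse.prod = (l.drop k).reverse.prod * (l.take k).reverse.prod := by
  conv_lhs => rw [← List.take_append_drop k l]
  rw [List.reverse_append, List.prod_append]

lemma cycHolds_of_commute {l : List G} (h : ∀ a ∈ l, Commute l.reverse.prod a) :
    cycHolds l := by
  intro k
  rcases Nat.eq_zero_or_pos l.length with h0 | hpos
  · rw [List.length_eq_zero_iff] at h0; subst h0; simp
  · have hk : k % l.length ≤ l.length := le_of_lt (Nat.mod_lt _ hpos)
    rw [← List.rotate_mod, rev_prod_rotate l hk]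
    set u := (l.take (k % l.length)).reverse.prod with hu_def
    set v := (l.drop (k % l.length)).reverse.prod with hv_def
    have hp : l.reverse.prod = v * u := rev_prod_split l _
    have hu : Commute l.reverse.prod u := by
      apply Commute.list_prod_right
      intro a ha
      exact h a (List.mem_of_mem_take (List.mem_reverse.mp ha))
    rw [hp] at hu
    have h2 : v * u * u = u * (v * u) := hu
    have h4 : v * u = u * v :=
      mul_right_cancel (b := u) (by rw [mul_assoc u v u]; exact h2)
    rw [hp, h4]

lemma commute_of_cycHolds {l : List G} (h : cycHolds l) :
    ∀ a ∈ l, Commute l.reverse.prod a := by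
  have key : ∀ k, k ≤ l.length → Commute l.reverse.prod (l.take k).reverse.prod := by
    intro k hk
    have h1 := h k
    rw [rev_prod_rotate l hk] at h1
    set u := (l.take k).reverse.prod
    set v := (l.drop k).reverse.prod
    have hp : l.reverse.prod = v * u := rev_prod_split l _
    have huv : Commute u v := by
      have : u * v = v * u := by rw [h1, hp]
      exact this
    rw [hp]
    exact huv.symm.mul_left (Commute.refl u)
  intro a ha
  obtain ⟨i, hi, rfl⟩ := List.mem_iff_getElem.mp ha
  have h1 := key i (le_of_lt hi)
  have h2 := key (i + 1) hi
  have hsucc : (l.take (i + 1)).reverse.prod = l[i] * (l.take i).reverse.prod := by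
    rw [List.take_succ, List.getElem?_eq_getElem hi,
      show (some l[i]).toList = [l[i]] from rfl, List.reverse_append, List.prod_append]
    simp
  rw [hsucc] at h2
  have : Commute l.reverse.prod (l[i] * (l.take i).reverse.prod * ((l.take i).reverse.prod)⁻¹) :=
    h2.mul_right h1.inv_right
  simpa using this

lemma commute_conj {g a b : G} (h : Commute (g * a * g⁻¹) (g * b * g⁻¹)) : Commute a b := by
  have := h.map (MulAut.conj g⁻¹).toMonoidHom
  simpa [MulAut.conj_apply, mul_assoc] using this

lemma commute_of_cycHolds_pair {a b : G} (h : cycHolds [a, b]) : Commute a b := by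
  have h1 := h 1
  simp [List.rotate_cons_succ] at h1
  exact h1

lemma commute_cancel_left {g a : G} (h : Commute (g * a) g) : Commute a g := by
  have h1 : g * (a * g) = g * (g * a) := by rw [← mul_assoc]; exact h
  exact mul_left_cancel h1

end CycAux

section PG
variable {α : Type*} {rels : Set (FreeGroup α)}

lemma cycHolds_mk {l : List (FreeGroup α)} (h : cycRels l ⊆ rels) :
    cycHolds (l.map (PresentedGroup.mk rels)) := by
  intro k
  have hrel : PresentedGroup.mk rels ((l.rotate k).reverse.prod * (l.reverse.prod)⁻¹) = 1 := by
    have hmem : (l.rotate k).reverse.prod * (l.reverse.prod)⁻¹ ∈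
        Subgroup.normalClosure rels :=
      Subgroup.subset_normalClosure (h ⟨k, rfl⟩)
    exact (QuotientGroup.eq_one_iff _).mpr hmem
  rw [map_mul, map_inv, mul_inv_eq_one] at hrel
  calc ((l.map (PresentedGroup.mk rels)).rotate k).reverse.prod
      = PresentedGroup.mk rels ((l.rotate k).reverse.prod) := by
        rw [← List.map_rotate, ← List.map_reverse, (PresentedGroup.mk rels).map_list_prod]
    _ = PresentedGroup.mk rels (l.reverse.prod) := hrel
    _ = (l.map (PresentedGroup.mk rels)).reverse.prod := by
        rw [← List.map_reverse, (PresentedGroup.mk rels).map_list_prod]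

end PG

section DprodAux
variable {M N : Type*} [Monoid M] [Monoid N]

lemma dprod_nil (X : ℕ → M) {a b : ℕ} (h : b < a) : dprod X a b = 1 := by
  unfold dprod
  rw [Nat.sub_eq_zero_of_le h]
  simp

lemma dprod_single (X : ℕ → M) (a : ℕ) : dprod X a a = X a := by
  unfold dprod
  simp

lemma dprod_split (X : ℕ → M) {a m b : ℕ} (ha : a ≤ m + 1) (hm : m ≤ b) :
    dprod X a b = dprod X (m + 1) b * dprod X a m := by
  unfold dprod
  rw [show b + 1 - (m + 1) = b - m from by omega]
  have h1 : List.range' a (b + 1 - a) =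
      List.range' a (m + 1 - a) ++ List.range' (m + 1) (b - m) := by
    have h2 := List.range'_append_1 (s := a) (m := m + 1 - a) (n := b - m)
    rw [show a + (m + 1 - a) = m + 1 from by omega] at h2
    rw [h2]
    congr 1
    omega
  rw [h1, List.reverse_append, List.map_append, List.prod_append]

lemma map_dprod (f : M →* N) (X : ℕ → M) (a b : ℕ) :
    f (dprod X a b) = dprod (fun i => f (X i)) a b := by
  unfold dprod
  rw [f.map_list_prod, List.map_map]
  rfl

lemma rev_prod_range' (X : ℕ → M) {s m b : ℕ} (h : s + m = b + 1) :
    ((List.range' s m).map X).reverse.prod = dprod X s b := by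
  unfold dprod
  rw [show b + 1 - s = m from by omega, List.map_reverse]

end DprodAux

section Main

variable (n : ℕ)

/-- In `G(n) = ⟨x₁,…,x₃ₙ ∣ R_orig(n)⟩` the cyclic relation `[x₁, x₂ₙ₊₁, …, x₃ₙ]` holds:
`x₃ₙ ⋯ x₂ₙ₊₁ x₁ = x₃ₙ₋₁ ⋯ x₂ₙ₊₁ x₁ x₃ₙ = ⋯ = x₁ x₃ₙ ⋯ x₂ₙ₊₁`. -/
theorem cyclic_relation_in_Gn' (n : ℕ) (hn : 2 ≤ n) :
    cycHolds (genG n 1 :: (List.range' (2 * n + 1) n).map (genG n)) := by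
  -- abbreviations
  have hmk : ∀ i : ℕ, PresentedGroup.mk (Rorig n) (gen (3 * n) i) = genG n i := fun _ => rfl
  have hmkd : ∀ a b : ℕ,
      PresentedGroup.mk (Rorig n) (dprod (gen (3 * n)) a b) = dprod (genG n) a b := by
    intro a b
    rw [map_dprod]
    rfl
  set x : ℕ → PresentedGroup (Rorig n) := genG n with hx
  set A : PresentedGroup (Rorig n) := dprod x (n + 1) (2 * n) with hA
  set w : PresentedGroup (Rorig n) := dprod x 2 (2 * n) with hw
  -- relations (5)
  have h5 : ∀ i j : ℕ, n + 1 ≤ i → i ≤ 2 * n → 2 * n + 2 ≤ j → j ≤ 3 * n →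
      Commute (x i) (x j) := by
    intro i j hi1 hi2 hj1 hj2
    have hsub : cycRels [gen (3 * n) i, gen (3 * n) j] ⊆ Rorig n := by
      intro r hr
      simp only [Rorig, Set.mem_union]
      refine Or.inl (Or.inr ?_)
      exact Set.mem_biUnion (Set.mem_Icc.mpr ⟨hi1, hi2⟩)
        (Set.mem_biUnion (Set.mem_Icc.mpr ⟨hj1, hj2⟩) hr)
    have hc := cycHolds_mk hsub
    simp only [List.map_cons, List.map_nil, hmk] at hc
    exact commute_of_cycHolds_pair hc
  -- relation (6) : A commutes with x (2n+1)
  have h6 : Commute A (x (2 * n + 1)) := by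
    have hsub : cycRels ((List.range' (n + 1) n).map (gen (3 * n)) ++ [gen (3 * n) (2 * n + 1)])
        ⊆ Rorig n := by
      intro r hr
      simp only [Rorig, Set.mem_union]
      exact Or.inr hr
    have hc := cycHolds_mk hsub
    rw [List.map_append, List.map_map, List.map_cons, List.map_nil] at hc
    have hc' : cycHolds ((List.range' (n + 1) n).map x ++ [x (2 * n + 1)]) := hc
    have hmem : x (2 * n + 1) ∈ (List.range' (n + 1) n).map x ++ [x (2 * n + 1)] := by
      simp
    have hcom := commute_of_cycHolds hc' _ hmem
    have hrev : ((List.range' (n + 1) n).map x ++ [x (2 * n + 1)]).reverse.prod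
        = x (2 * n + 1) * A := by
      rw [List.reverse_append, List.prod_append, hA,
        ← rev_prod_range' x (show (n + 1) + n = 2 * n + 1 by ring)]
      simp
    rw [hrev] at hcom
    exact commute_cancel_left hcom
  -- A commutes with all x j for 2n+1 ≤ j ≤ 3n
  have hAj : ∀ j : ℕ, 2 * n + 1 ≤ j → j ≤ 3 * n → Commute A (x j) := by
    intro j hj1 hj2
    rcases eq_or_lt_of_le hj1 with heq | hlt
    · rw [← heq]; exact h6
    · rw [hA]
      apply Commute.list_prod_left
      intro a ha
      rw [List.mem_map] at ha
      obtain ⟨i, hi, rfl⟩ := ha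
      rw [List.mem_reverse, List.mem_range'_1] at hi
      exact h5 i j (by omega) (by omega) (by omega) hj2
  -- relations (4)
  have h4 : ∀ i j : ℕ, 2 ≤ i → i ≤ n → 2 * n + 1 ≤ j → j ≤ 3 * n →
      Commute (dprod x (i + 1) (2 * n) * x i * (dprod x (i + 1) (2 * n))⁻¹) (x j) := by
    intro i j hi1 hi2 hj1 hj2
    have hsub : cycRels [dprod (gen (3 * n)) (i + 1) (2 * n) * gen (3 * n) i *
        (dprod (gen (3 * n)) (i + 1) (2 * n))⁻¹, gen (3 * n) j] ⊆ Rorig n := by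
      intro r hr
      simp only [Rorig, Set.mem_union]
      refine Or.inl (Or.inl (Or.inr ?_))
      exact Set.mem_biUnion (Set.mem_Icc.mpr ⟨hi1, hi2⟩)
        (Set.mem_biUnion (Set.mem_Icc.mpr ⟨hj1, hj2⟩) hr)
    have hc := cycHolds_mk hsub
    simp only [List.map_cons, List.map_nil, map_mul, map_inv, hmk, hmkd] at hc
    exact commute_of_cycHolds_pair hc
  -- telescoping : A * (x n ⋯ x 2) * A⁻¹ commutes with x j
  have htel : ∀ j : ℕ, 2 * n + 1 ≤ j → j ≤ 3 * n →
      Commute (A * dprod x 2 n * A⁻¹) (x j) := by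
    intro j hj1 hj2
    have key : ∀ m : ℕ, m ≤ n - 1 → Commute (A * dprod x (n + 1 - m) n * A⁻¹) (x j) := by
      intro m
      induction m with
      | zero =>
        intro _
        rw [Nat.sub_zero, dprod_nil x (Nat.lt_succ_self n)]
        simp
      | succ m ih =>
        intro hm
        have hk2 : 2 ≤ n - m := by omega
        set k := n - m with hk
        have hkn : k ≤ n := by omega
        have hstep : n + 1 - (m + 1) = k := by omega
        rw [hstep]
        have hsplit1 : dprod x k n = dprod x (k + 1) n * x k := by
          rw [dprod_split x (Nat.le_succ k) hkn, dprod_single]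
        have hsplit2 : dprod x (k + 1) (2 * n) = A * dprod x (k + 1) n := by
          rw [hA, dprod_split x (show k + 1 ≤ n + 1 by omega) (show n ≤ 2 * n by omega)]
        have hprev : n + 1 - m = k + 1 := by omega
        have ih' : Commute (A * dprod x (k + 1) n * A⁻¹) (x j) := by
          have := ih (by omega)
          rwa [hprev] at this
        have hfac : A * dprod x k n * A⁻¹ =
            (dprod x (k + 1) (2 * n) * x k * (dprod x (k + 1) (2 * n))⁻¹) *
              (A * dprod x (k + 1) n * A⁻¹) := by
          rw [hsplit1, hsplit2]
          group
        rw [hfac]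
        exact (h4 k j hk2 hkn hj1 hj2).mul_left ih'
    have := key (n - 1) (le_refl _)
    rwa [show n + 1 - (n - 1) = 2 by omega] at this
  -- w commutes with x j
  have hwj : ∀ j : ℕ, 2 * n + 1 ≤ j → j ≤ 3 * n → Commute w (x j) := by
    intro j hj1 hj2
    have hsplit : w = (A * dprod x 2 n * A⁻¹) * A := by
      rw [hw, hA, dprod_split x (show 2 ≤ n + 1 by omega) (show n ≤ 2 * n by omega)]
      group
    rw [hsplit]
    exact (htel j hj1 hj2).mul_left (hAj j hj1 hj2)
  -- relation (3)
  set M : List (PresentedGroup (Rorig n)) := (List.range' (2 * n + 1) n).map x with hM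
  set c : PresentedGroup (Rorig n) := w * x 1 * w⁻¹ with hc_def
  have h3 : cycHolds (c :: M) := by
    have hsub : cycRels ((dprod (gen (3 * n)) 2 (2 * n) * gen (3 * n) 1 *
        (dprod (gen (3 * n)) 2 (2 * n))⁻¹) :: (List.range' (2 * n + 1) n).map (gen (3 * n)))
        ⊆ Rorig n := by
      intro r hr
      simp only [Rorig, Set.mem_union]
      exact Or.inl (Or.inl (Or.inl (Or.inr hr)))
    have hc := cycHolds_mk hsub
    rw [List.map_cons, List.map_map] at hc
    simp only [map_mul, map_inv, hmk, hmkd] at hc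
    exact hc
  set T : PresentedGroup (Rorig n) := M.reverse.prod with hT
  have hmemM : ∀ a ∈ M, ∃ j : ℕ, 2 * n + 1 ≤ j ∧ j ≤ 3 * n ∧ a = x j := by
    intro a ha
    rw [hM, List.mem_map] at ha
    obtain ⟨j, hj, rfl⟩ := ha
    rw [List.mem_range'_1] at hj
    exact ⟨j, by omega, by omega, rfl⟩
  have hwT : Commute w T := by
    rw [hT]
    apply Commute.list_prod_right
    intro a ha
    rw [List.mem_reverse] at ha
    obtain ⟨j, hj1, hj2, rfl⟩ := hmemM a ha
    exact hwj j hj1 hj2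
  have hrev3 : (c :: M).reverse.prod = T * c := by
    rw [List.reverse_cons, List.prod_append, hT]
    simp
  have hTc : T * c = w * (T * x 1) * w⁻¹ := by
    rw [hc_def]
    simp only [← mul_assoc]
    rw [← hwT.eq]
  have hconj : ∀ j : ℕ, 2 * n + 1 ≤ j → j ≤ 3 * n → w * x j * w⁻¹ = x j := by
    intro j hj1 hj2
    rw [(hwj j hj1 hj2).eq, mul_inv_cancel_right]
  have hcom3 := commute_of_cycHolds h3
  -- final assembly
  apply cycHolds_of_commute
  have hrevGoal : (x 1 :: M).reverse.prod = T * x 1 := by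
    rw [List.reverse_cons, List.prod_append, hT]
    simp
  intro a ha
  rw [hrevGoal]
  rcases List.mem_cons.mp ha with rfl | haM
  · -- a = x 1
    have hQc : Commute (T * c) c := by
      have := hcom3 c (List.mem_cons_self (a := c) (l := M))
      rwa [hrev3] at this
    rw [hTc, hc_def] at hQc
    exact commute_conj hQc
  · obtain ⟨j, hj1, hj2, rfl⟩ := hmemM a haM
    have hQj : Commute (T * c) (x j) := by
      have := hcom3 (x j) (List.mem_cons_of_mem c haM)
      rwa [hrev3] at this
    rw [hTc, ← hconj j hj1 hj2] at hQj
    exact commute_conj hQj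

end Main
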